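/- Let F be a nonempty set of graphs. If the class of F-free graphs has the CKS property, then F contains at least one star forest and at least one graph whose complement is a star forest. -/

import Mathlib

attribute [local instance] Classical.propDecidable

/-- A collection of finite simple graphs, given as a property of simple graphs over every
finite vertex type. -/
abbrev GraphClass : Type 1 :=
  ∀ (V : Type) [Fintype V], SimpleGraph V → Prop

/-- A graph `G` is `F`-free if no induced subgraph of `G` is isomorphic to a member of
`F`. -/
def FFree (F : GraphClass) {V : Type} [Fintype V] (G : SimpleGraph V) : Prop :=
  ∀ (S : Set V) (W : Type) (_ : Fintype W) (H : SimpleGraph W),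
    F W H → IsEmpty (G.induce S ≃g H)

/-- `U` is a maximal `F`-free set of `G`: `G[U]` is `F`-free and no proper superset of
`U` induces an `F`-free subgraph of `G`. -/
def IsMaxFFreeSet (F : GraphClass) {V : Type} [Fintype V] (G : SimpleGraph V)
    (U : Set V) : Prop :=
  FFree F (G.induce U) ∧ ∀ T : Set V, U ⊂ T → ¬ FFree F (G.induce T)

/-- The class of `F`-free graphs has the CKS property: there is a polynomial `p` such
that every graph `G` on `n` vertices having a maximal `F`-free set of size `n - 1` has at
most `p(n)` maximal `F`-free sets. -/
def HasCKS_FFree (F : GraphClass) : Prop :=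
  ∃ p : Polynomial ℕ, ∀ (V : Type) (_ : Fintype V) (G : SimpleGraph V),
    (∃ S : Set V, IsMaxFFreeSet F G S ∧ S.ncard = Fintype.card V - 1) →
    {S : Set V | IsMaxFFreeSet F G S}.ncard ≤ p.eval (Fintype.card V)

/-- A graph is a star forest if every connected component of it is a star: some vertex of
the component (its center) is adjacent to exactly the other vertices of the component,
and no two other vertices are adjacent.  (A single vertex counts as a degenerate star.) -/
def IsStarForest {W : Type} (H : SimpleGraph W) : Prop :=
  ∀ c : H.ConnectedComponent, ∃ ctr ∈ c.supp,
    ∀ a ∈ c.supp, ∀ b ∈ c.supp, (H.Adj a b ↔ a ≠ b ∧ (a = ctr ∨ b = ctr))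

/-! ### Star covers: a workable characterization of star forests -/

/-- A *star cover* of a graph is a set `C` of "centers" such that every edge has exactly
one endpoint in `C` and every vertex outside `C` has at most one neighbor. -/
def HasStarCover {W : Type} (H : SimpleGraph W) : Prop :=
  ∃ C : Set W, (∀ a b, H.Adj a b → (a ∈ C ↔ b ∉ C)) ∧
    (∀ a, a ∉ C → ∀ b c, H.Adj a b → H.Adj a c → b = c)

section StarCover

variable {W : Type} {H : SimpleGraph W}

private lemma adj_center_of_walk {C : Set W}
    (hA : ∀ a b, H.Adj a b → (a ∈ C ↔ b ∉ C))
    (hB : ∀ a, a ∉ C → ∀ b c, H.Adj a b → H.Adj a c → b = c)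
    {u w : W} (hw : w ∈ C) (p : H.Walk u w) : u = w ∨ H.Adj u w := by
  induction p with
  | nil => exact Or.inl rfl
  | @cons u x w h p ih =>
    rcases ih hw with rfl | hxw
    · exact Or.inr h
    · have hxC : x ∉ C := by
        intro hxC
        exact ((hA x w hxw).mp hxC) hw
      exact Or.inl (hB x hxC u w h.symm hxw)

lemma isStarForest_of_hasStarCover (h : HasStarCover H) : IsStarForest H := by
  obtain ⟨C, hA, hB⟩ := h
  intro c
  obtain ⟨v, hv⟩ := c.exists_rep
  by_cases hCc : ∃ w, w ∈ c.supp ∧ w ∈ C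
  · obtain ⟨w, hw, hwC⟩ := hCc
    refine ⟨w, hw, ?_⟩
    intro a ha b hb
    have hreach : ∀ z, z ∈ c.supp → z ≠ w → H.Adj z w := by
      intro z hz hzw
      have h1 : H.connectedComponentMk z = H.connectedComponentMk w := by
        rw [SimpleGraph.ConnectedComponent.mem_supp_iff] at hz hw
        rw [hz, hw]
      obtain ⟨p⟩ := SimpleGraph.ConnectedComponent.exact h1
      rcases adj_center_of_walk hA hB hwC p with rfl | hadj
      · exact absurd rfl hzw
      · exact hadj
    constructor
    · intro hab
      refine ⟨hab.ne, ?_⟩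
      by_contra hcon
      push_neg at hcon
      obtain ⟨haw, hbw⟩ := hcon
      have ha' : H.Adj a w := hreach a ha haw
      have hb' : H.Adj b w := hreach b hb hbw
      have haC : a ∉ C := fun haC => ((hA a w ha').mp haC) hwC
      have hbC : b ∉ C := fun hbC => ((hA b w hb').mp hbC) hwC
      rcases (hA a b hab).mpr hbC with haC'
      exact haC haC'
    · rintro ⟨hne, rfl | rfl⟩
      · exact (hreach b hb (fun hbw => hne hbw.symm)).symm
      · exact hreach a ha hne
  · push_neg at hCc
    refine ⟨v, (SimpleGraph.ConnectedComponent.mem_supp_iff c v).mpr hv, ?_⟩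
    have huniq : ∀ z, z ∈ c.supp → z = v := by
      intro z hz
      have h1 : H.connectedComponentMk z = H.connectedComponentMk v := by
        rw [SimpleGraph.ConnectedComponent.mem_supp_iff] at hz
        rw [hz]
        exact hv.symm
      obtain ⟨p⟩ := SimpleGraph.ConnectedComponent.exact h1
      cases p with
      | nil => rfl
      | @cons _ y _ h p =>
        exfalso
        have hyz : y ∈ c.supp := by
          rw [SimpleGraph.ConnectedComponent.mem_supp_iff] at hz ⊢
          rw [← hz]
          exact (SimpleGraph.ConnectedComponent.sound h.reachable).symm
        by_cases hzC : z ∈ C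
        · exact hCc z hz hzC
        · exact hCc y hyz (by
            have := hA z y h
            by_contra hyC
            exact hzC (this.mpr hyC))
    intro a ha b hb
    have ha' := huniq a ha
    have hb' := huniq b hb
    subst ha'; subst hb'
    constructor
    · intro hadj
      exact absurd hadj (H.loopless.irrefl _)
    · rintro ⟨hne, _⟩
      exact absurd rfl hne

lemma hasStarCover_of_isStarForest (h : IsStarForest H) : HasStarCover H := by
  classical
  set ctrOf : H.ConnectedComponent → W := fun c => (h c).choose with hctrOf
  have hctr1 : ∀ c, ctrOf c ∈ c.supp := fun c => (h c).choose_spec.1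
  have hctr2 : ∀ c, ∀ a ∈ c.supp, ∀ b ∈ c.supp,
      (H.Adj a b ↔ a ≠ b ∧ (a = ctrOf c ∨ b = ctrOf c)) := fun c => (h c).choose_spec.2
  refine ⟨{v | v = ctrOf (H.connectedComponentMk v)}, ?_, ?_⟩
  · intro a b hab
    have hcomp : H.connectedComponentMk b = H.connectedComponentMk a :=
      (SimpleGraph.ConnectedComponent.sound hab.reachable).symm
    have ha : a ∈ (H.connectedComponentMk a).supp := by
      rw [SimpleGraph.ConnectedComponent.mem_supp_iff]
    have hb : b ∈ (H.connectedComponentMk a).supp := by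
      rw [SimpleGraph.ConnectedComponent.mem_supp_iff]; exact hcomp
    have hstar := (hctr2 (H.connectedComponentMk a) a ha b hb).mp hab
    simp only [Set.mem_setOf_eq, hcomp]
    rcases hstar.2 with h1 | h1
    · constructor
      · intro _ hbc
        exact hstar.1 (h1.trans hbc.symm)
      · intro hbc
        exact h1
    · constructor
      · intro hac
        exact absurd (hac.trans h1.symm) hstar.1
      · intro hbc
        exact absurd h1 hbc
  · intro a haC b c hab hac
    have ha : a ∈ (H.connectedComponentMk a).supp := by
      rw [SimpleGraph.ConnectedComponent.mem_supp_iff]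
    have hb : b ∈ (H.connectedComponentMk a).supp := by
      rw [SimpleGraph.ConnectedComponent.mem_supp_iff]
      exact (SimpleGraph.ConnectedComponent.sound hab.reachable).symm
    have hc : c ∈ (H.connectedComponentMk a).supp := by
      rw [SimpleGraph.ConnectedComponent.mem_supp_iff]
      exact (SimpleGraph.ConnectedComponent.sound hac.reachable).symm
    have h1 := (hctr2 _ a ha b hb).mp hab
    have h2 := (hctr2 _ a ha c hc).mp hac
    simp only [Set.mem_setOf_eq] at haC
    rcases h1.2 with h1' | h1'
    · exact absurd h1' haC
    · rcases h2.2 with h2' | h2'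
      · exact absurd h2' haC
      · rw [h1', h2']

lemma isStarForest_iff_hasStarCover : IsStarForest H ↔ HasStarCover H :=
  ⟨hasStarCover_of_isStarForest, isStarForest_of_hasStarCover⟩

end StarCover
/-! ### Transfer lemmas for star covers and isomorphisms -/

section Transfer

variable {V V' : Type} {G : SimpleGraph V} {G' : SimpleGraph V'}

lemma HasStarCover.of_iso (e : G ≃g G') (h : HasStarCover G) : HasStarCover G' := by
  obtain ⟨C, hA, hB⟩ := h
  refine ⟨{w | e.symm w ∈ C}, ?_, ?_⟩
  · intro a b hab
    exact hA _ _ ((e.symm.map_adj_iff).mpr hab)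
  · intro a haC b c hab hac
    have h1 : G.Adj (e.symm a) (e.symm b) := (e.symm.map_adj_iff).mpr hab
    have h2 : G.Adj (e.symm a) (e.symm c) := (e.symm.map_adj_iff).mpr hac
    exact e.symm.toEquiv.injective (hB _ haC _ _ h1 h2)

lemma HasStarCover.mono {B B' : Set V} (hBB' : B ⊆ B')
    (h : HasStarCover (G.induce B')) : HasStarCover (G.induce B) := by
  obtain ⟨C, hA, hB⟩ := h
  refine ⟨{v : ↑B | (⟨v.1, hBB' v.2⟩ : ↑B') ∈ C}, ?_, ?_⟩
  · intro a b hab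
    exact hA ⟨a.1, hBB' a.2⟩ ⟨b.1, hBB' b.2⟩ hab
  · intro a haC b c hab hac
    have h3 := hB ⟨a.1, hBB' a.2⟩ haC ⟨b.1, hBB' b.2⟩ ⟨c.1, hBB' c.2⟩ hab hac
    have h4 : (b : V) = (c : V) := congrArg (fun z : ↑B' => z.1) h3
    exact Subtype.ext h4

/-- Composing two `induce`s. -/
noncomputable def induceInduceIso (G : SimpleGraph V) (B : Set V) (S : Set ↑B) :
    (G.induce B).induce S ≃g G.induce (Subtype.val '' S) where
  toEquiv := Equiv.Set.image Subtype.val S Subtype.val_injective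
  map_rel_iff' := Iff.rfl

/-- An isomorphism restricts to induced subgraphs. -/
noncomputable def isoInduceImage (e : G ≃g G') (B : Set V) :
    G.induce B ≃g G'.induce (⇑e '' B) where
  toEquiv := e.toEquiv.image B
  map_rel_iff' := by
    intro a b
    exact e.map_adj_iff

/-- Every graph on at most two vertices has a star cover. -/
lemma hasStarCover_of_card_le_two [Fintype V] (h : Fintype.card V ≤ 2) :
    HasStarCover G := by
  by_cases hE : ∃ a b, G.Adj a b
  · obtain ⟨a, b, hab⟩ := hE
    have htri : ∀ u v : V, u ≠ v → u = a ∨ v = a := by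
      intro u v hne
      by_contra hcon
      push_neg at hcon
      have hua : u ≠ a := hcon.1
      have hva : v ≠ a := hcon.2
      have hcard : 3 ≤ Fintype.card V := by
        have hc : ({u, v, a} : Finset V).card = 3 := by
          rw [Finset.card_insert_of_notMem (by simp [hne, hua]),
              Finset.card_insert_of_notMem (by simp [hva]),
              Finset.card_singleton]
        rw [← hc]
        exact Finset.card_le_univ _
      omega
    refine ⟨{a}, ?_, ?_⟩
    · intro u v huv
      rcases htri u v huv.ne with h1 | h1
      · simp only [Set.mem_singleton_iff]
        exact ⟨fun _ hv => huv.ne (h1.trans hv.symm), fun _ => h1⟩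
      · have hu : u ≠ a := fun h2 => huv.ne (h2.trans h1.symm)
        simp only [Set.mem_singleton_iff]
        exact ⟨fun h2 => absurd h2 hu, fun h2 => absurd h1 h2⟩
    · intro u huC v w huv huw
      simp only [Set.mem_singleton_iff] at huC
      rcases htri u v huv.ne with h1 | h1
      · exact absurd h1 huC
      · rcases htri u w huw.ne with h2 | h2
        · exact absurd h2 huC
        · rw [h1, h2]
  · push_neg at hE
    exact ⟨Set.univ, fun u v huv => absurd huv (hE u v),
      fun u huC => absurd (Set.mem_univ u) huC⟩

end Transfer

/-! ### Maximal extension and growth lemmas -/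

section MaxExt

variable (F : GraphClass)

lemma not_FFree_of_isoSubset {V : Type} [Fintype V] {G : SimpleGraph V}
    {W : Type} (iW : Fintype W) {H : SimpleGraph W} (hH : F W H)
    {S T : Set V} (hST : S ⊆ T) (e : G.induce S ≃g H) :
    ¬ FFree F (G.induce T) := by
  intro hT
  have h1 := hT (Subtype.val ⁻¹' S) W iW H hH
  have hset : (Subtype.val '' (Subtype.val ⁻¹' S : Set ↑T)) = S := by
    rw [Subtype.image_preimage_coe]
    exact Set.inter_eq_self_of_subset_right hST
  have i1 := induceInduceIso G T (Subtype.val ⁻¹' S)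
  rw [hset] at i1
  exact h1.false (i1.trans e)

lemma exists_maxFFree_superset {V : Type} [Fintype V] (G : SimpleGraph V) (U : Set V)
    (hU : FFree F (G.induce U)) : ∃ M, U ⊆ M ∧ IsMaxFFreeSet F G M := by
  classical
  have hfin : {T : Set V | U ⊆ T ∧ FFree F (G.induce T)}.Finite := Set.toFinite _
  obtain ⟨M, hM, hmax⟩ := Set.Finite.exists_maximalFor (fun T => T.ncard) _ hfin
    ⟨U, subset_rfl, hU⟩
  refine ⟨M, hM.1, hM.2, ?_⟩
  intro T hMT hT
  have hTmem : T ∈ {T : Set V | U ⊆ T ∧ FFree F (G.induce T)} := ⟨hM.1.trans hMT.subset, hT⟩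
  have hle : M.ncard ≤ T.ncard := Set.ncard_le_ncard hMT.subset (Set.toFinite T)
  have heq : T.ncard ≤ M.ncard := hmax hTmem hle
  have hlt : M.ncard < T.ncard := Set.ncard_lt_ncard hMT (Set.toFinite T)
  omega

end MaxExt

section Growth

lemma growth_aux : ∀ e c : ℕ, ∃ K, ∀ k, K ≤ k → c * (k+1)^e < 2^k := by
  intro e
  induction e with
  | zero =>
    intro c
    refine ⟨c+1, fun k hk => ?_⟩
    have h1 : c < 2^c := Nat.lt_two_pow_self (n := c)
    have h2 : (2:ℕ)^c ≤ 2^k := Nat.pow_le_pow_right (by norm_num) (by omega)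
    simpa using lt_of_lt_of_le h1 h2
  | succ e ih =>
    intro c
    obtain ⟨K, hK⟩ := ih (c * 3^(e+1))
    refine ⟨2*K + 2, fun k hk => ?_⟩
    set j := k / 2 with hjdef
    have hdm := Nat.div_add_mod k 2
    have hmlt : k % 2 < 2 := Nat.mod_lt k (by norm_num)
    have hjK : K ≤ j := by omega
    have h2j : 2 * j ≤ k := by omega
    have hk1 : k + 1 ≤ 3 * (j + 1) := by omega
    have hlt : c * 3^(e+1) * (j+1)^e < 2^j := hK j hjK
    have hle : j + 1 ≤ 2^j := Nat.succ_le_of_lt (Nat.lt_two_pow_self (n := j))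
    calc c * (k+1)^(e+1) ≤ c * (3*(j+1))^(e+1) :=
          Nat.mul_le_mul_left c (Nat.pow_le_pow_left hk1 _)
      _ = (c * 3^(e+1) * (j+1)^e) * (j+1) := by rw [mul_pow]; ring
      _ < 2^j * (j+1) := by
          exact (Nat.mul_lt_mul_right (Nat.succ_pos j)).mpr hlt
      _ ≤ 2^j * 2^j := Nat.mul_le_mul_left _ hle
      _ = 2^(j + j) := by rw [pow_add]
      _ ≤ 2^k := Nat.pow_le_pow_right (by norm_num) (by omega)

lemma poly_eval_le (p : Polynomial ℕ) (n : ℕ) :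
    p.eval n ≤ (∑ i ∈ Finset.range (p.natDegree + 1), p.coeff i) * (n+1)^(p.natDegree) := by
  rw [Polynomial.eval_eq_sum_range, Finset.sum_mul]
  apply Finset.sum_le_sum
  intro i hi
  have h1 : n^i ≤ (n+1)^i := Nat.pow_le_pow_left (by omega) i
  have h2 : (n+1)^i ≤ (n+1)^(p.natDegree) :=
    Nat.pow_le_pow_right (by omega) (Nat.lt_succ_iff.mp (Finset.mem_range.mp hi))
  exact Nat.mul_le_mul (le_refl _) (h1.trans h2)

lemma exists_big_k (p : Polynomial ℕ) (a b : ℕ) :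
    ∃ k, 1 ≤ k ∧ p.eval (a + b * k) < 2^k := by
  classical
  set d := p.natDegree with hd
  set C0 := (∑ i ∈ Finset.range (d + 1), p.coeff i) with hC0
  obtain ⟨K, hK⟩ := growth_aux d (C0 * (a+b+1)^d)
  refine ⟨K + 1, by omega, ?_⟩
  have h1 : p.eval (a + b*(K+1)) ≤ C0 * (a + b*(K+1) + 1)^d := poly_eval_le p _
  have h2 : a + b*(K+1) + 1 ≤ (a+b+1) * (K+1+1) := by nlinarith
  calc p.eval (a + b*(K+1)) ≤ C0 * (a + b*(K+1) + 1)^d := h1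
    _ ≤ C0 * ((a+b+1) * (K+1+1))^d :=
        Nat.mul_le_mul (le_refl _) (Nat.pow_le_pow_left h2 _)
    _ = (C0 * (a+b+1)^d) * ((K+1)+1)^d := by rw [mul_pow]; ring
    _ < 2^(K+1) := hK (K+1) (by omega)

end Growth
/-! ### The clone construction -/

section Construction

variable {W₀ : Type} [inst₀ : Fintype W₀]

/-- Vertex type of the clone graph: the deletion set `Y` plus `k` copies of its
complement. -/
abbrev Vk (Y : Set W₀) (k : ℕ) : Type := ↑Y ⊕ (↑(Yᶜ) × Fin k)

/-- The clone graph: `Y` induces as in `H₀`, each clone of `Yᶜ` attaches to `Y` as in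
`H₀`, distinct clones are non-adjacent. -/
def Gk (H₀ : SimpleGraph W₀) (Y : Set W₀) (k : ℕ) : SimpleGraph (Vk Y k) where
  Adj u v :=
    Sum.elim
      (fun (a : ↑Y) => Sum.elim (fun (b : ↑Y) => H₀.Adj ↑a ↑b)
        (fun (q : ↑(Yᶜ) × Fin k) => H₀.Adj ↑a ↑q.1) v)
      (fun (p : ↑(Yᶜ) × Fin k) => Sum.elim (fun (b : ↑Y) => H₀.Adj ↑p.1 ↑b)
        (fun (q : ↑(Yᶜ) × Fin k) => p.2 = q.2 ∧ H₀.Adj ↑p.1 ↑q.1) v) u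
  symm := ⟨by
    rintro (a | p) (b | q) h
    · exact h.symm
    · exact h.symm
    · exact h.symm
    · exact ⟨h.1.symm, h.2.symm⟩⟩
  loopless := ⟨by
    rintro (a | p) h
    · exact H₀.irrefl h
    · exact H₀.irrefl h.2⟩

@[simp] lemma gk_adj_inl_inl {H₀ : SimpleGraph W₀} {Y : Set W₀} {k : ℕ}
    (a b : ↑Y) : (Gk H₀ Y k).Adj (Sum.inl a) (Sum.inl b) ↔ H₀.Adj ↑a ↑b := Iff.rfl

@[simp] lemma gk_adj_inl_inr {H₀ : SimpleGraph W₀} {Y : Set W₀} {k : ℕ}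
    (a : ↑Y) (q : ↑(Yᶜ) × Fin k) :
    (Gk H₀ Y k).Adj (Sum.inl a) (Sum.inr q) ↔ H₀.Adj ↑a ↑q.1 := Iff.rfl

@[simp] lemma gk_adj_inr_inl {H₀ : SimpleGraph W₀} {Y : Set W₀} {k : ℕ}
    (p : ↑(Yᶜ) × Fin k) (a : ↑Y) :
    (Gk H₀ Y k).Adj (Sum.inr p) (Sum.inl a) ↔ H₀.Adj ↑p.1 ↑a := Iff.rfl

@[simp] lemma gk_adj_inr_inr {H₀ : SimpleGraph W₀} {Y : Set W₀} {k : ℕ}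
    (p q : ↑(Yᶜ) × Fin k) :
    (Gk H₀ Y k).Adj (Sum.inr p) (Sum.inr q) ↔ p.2 = q.2 ∧ H₀.Adj ↑p.1 ↑q.1 := Iff.rfl

/-- The `i`-th canonical copy of `H₀` inside the clone graph. -/
def copySet (Y : Set W₀) (k : ℕ) (i : Fin k) : Set (Vk Y k) :=
  {u | Sum.elim (fun _ => True) (fun p => p.2 = i) u}

@[simp] lemma mem_copySet_inl {Y : Set W₀} {k : ℕ} {i : Fin k} (a : ↑Y) :
    Sum.inl a ∈ copySet Y k i := trivial

@[simp] lemma mem_copySet_inr {Y : Set W₀} {k : ℕ} {i : Fin k} (p : ↑(Yᶜ) × Fin k) :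
    Sum.inr p ∈ copySet Y k i ↔ p.2 = i := Iff.rfl

/-- The vertex bijection between the `i`-th canonical copy and `W₀`. -/
noncomputable def copyEquiv (Y : Set W₀) (k : ℕ) (i : Fin k) : ↑(copySet Y k i) ≃ W₀ where
  toFun u := Sum.elim (fun (a : ↑Y) => (a : W₀)) (fun (p : ↑(Yᶜ) × Fin k) => (p.1 : W₀)) u.1
  invFun w :=
    if h : w ∈ Y then ⟨Sum.inl ⟨w, h⟩, trivial⟩
    else ⟨Sum.inr (⟨w, h⟩, i), rfl⟩
  left_inv := by
    rintro ⟨a | ⟨⟨v, hv⟩, j⟩, hu⟩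
    · simp only [Sum.elim_inl]
      simp [a.2]
    · have hj : j = i := hu
      subst hj
      simp only [Sum.elim_inr]
      simp [show v ∉ Y from hv]
  right_inv := by
    intro w
    dsimp only
    by_cases h : w ∈ Y
    · rw [dif_pos h]
      rfl
    · rw [dif_neg h]
      rfl
  
/-- The `i`-th canonical copy induces a graph isomorphic to `H₀`. -/
noncomputable def copyIso (H₀ : SimpleGraph W₀) (Y : Set W₀) (k : ℕ) (i : Fin k) :
    (Gk H₀ Y k).induce (copySet Y k i) ≃g H₀ where
  toEquiv := copyEquiv Y k i
  map_rel_iff' := by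
    rintro ⟨a | p, ha⟩ ⟨b | q, hb⟩
    · exact Iff.rfl
    · exact Iff.rfl
    · exact Iff.rfl
    · have hp : p.2 = i := ha
      have hq : q.2 = i := hb
      show H₀.Adj ↑p.1 ↑q.1 ↔ p.2 = q.2 ∧ H₀.Adj ↑p.1 ↑q.1
      constructor
      · intro h
        exact ⟨hp.trans hq.symm, h⟩
      · intro h
        exact h.2

end Construction
/-! ### The certificate lemma: graphs that are a star forest after deleting fewer than
`ℓ` vertices are `F`-free, when every member of `F` needs at least `ℓ` deletions. -/

lemma FFree_of_small_del (F : GraphClass) {V' : Type} [Fintype V'] (G' : SimpleGraph V')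
    (ℓ : ℕ)
    (hmin : ∀ (W : Type) (iW : Fintype W) (H : SimpleGraph W), F W H →
      ∀ D : Set W, IsStarForest (H.induce Dᶜ) → ℓ ≤ D.ncard)
    (X Z : Set V') (hZ : Z.ncard < ℓ)
    (hSF : HasStarCover (G'.induce (X \ Z))) : FFree F (G'.induce X) := by
  intro S W iW H hH
  refine ⟨fun e => ?_⟩
  set A : Set V' := Subtype.val '' S with hA
  have hAX : A ⊆ X := by
    rintro v ⟨u, hu, rfl⟩
    exact u.2
  have i1 : (G'.induce X).induce S ≃g G'.induce A := induceInduceIso G' X S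
  have e' : G'.induce A ≃g H := i1.symm.trans e
  set ZA : Set ↑A := Subtype.val ⁻¹' Z with hZA
  set D : Set W := ⇑e' '' ZA with hD
  have hDcard : D.ncard ≤ Z.ncard := by
    rw [hD, Set.ncard_image_of_injective _ e'.injective, hZA,
      ← Set.ncard_image_of_injective _ (Subtype.val_injective : Function.Injective
        (Subtype.val : ↑A → V'))]
    apply Set.ncard_le_ncard _ (Set.toFinite Z)
    rintro v ⟨u, hu, rfl⟩
    exact hu
  have hDc : Dᶜ = ⇑e' '' ZAᶜ := by
    rw [hD, Set.image_compl_eq e'.bijective]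
  have i2 : (G'.induce A).induce ZAᶜ ≃g H.induce (⇑e' '' ZAᶜ) := isoInduceImage e' ZAᶜ
  have i3 : (G'.induce A).induce ZAᶜ ≃g G'.induce (Subtype.val '' (ZAᶜ : Set ↑A)) :=
    induceInduceIso G' A ZAᶜ
  have hval : Subtype.val '' (ZAᶜ : Set ↑A) = A \ Z := by
    rw [hZA, ← Set.preimage_compl, Subtype.image_preimage_coe, Set.diff_eq, Set.inter_comm]
  have hsub : A \ Z ⊆ X \ Z := fun v hv => ⟨hAX hv.1, hv.2⟩
  have hcov2 : HasStarCover (G'.induce (A \ Z)) := HasStarCover.mono hsub hSF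
  have c1 : HasStarCover (G'.induce (Subtype.val '' (ZAᶜ : Set ↑A))) := by
    rw [hval]; exact hcov2
  have c2 : HasStarCover ((G'.induce A).induce ZAᶜ) := HasStarCover.of_iso i3.symm c1
  have c3 : HasStarCover (H.induce (⇑e' '' ZAᶜ)) := HasStarCover.of_iso i2 c2
  have c4 : HasStarCover (H.induce Dᶜ) := by
    rw [hDc]; exact c3
  have := hmin W iW H hH D (isStarForest_of_hasStarCover c4)
  omega
section PickSet

variable {W₀ : Type}

/-- The candidate maximal set attached to a sign vector `s`: all of `Y`, together with
the "centers" part of clone `i` if `s i` and the "leaves" part otherwise. -/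
def pickSet (Y : Set W₀) (k : ℕ) (CP : Set ↑(Yᶜ)) (s : Fin k → Bool) : Set (Vk Y k) :=
  {u | Sum.elim (fun _ => True) (fun p => (p.1 ∈ CP ↔ s p.2 = true)) u}

@[simp] lemma mem_pickSet_inl {Y : Set W₀} {k : ℕ} {CP : Set ↑(Yᶜ)} {s : Fin k → Bool}
    (a : ↑Y) : Sum.inl a ∈ pickSet Y k CP s := trivial

@[simp] lemma mem_pickSet_inr {Y : Set W₀} {k : ℕ} {CP : Set ↑(Yᶜ)} {s : Fin k → Bool}
    (p : ↑(Yᶜ) × Fin k) :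
    Sum.inr p ∈ pickSet Y k CP s ↔ (p.1 ∈ CP ↔ s p.2 = true) := Iff.rfl

end PickSet

lemma construction_bound (F : GraphClass) {W₀ : Type} [inst₀ : Fintype W₀]
    (H₀ : SimpleGraph W₀) (hF₀ : F W₀ H₀) (Y : Set W₀) (x0 : ↑Y) (ℓ : ℕ)
    (hYcard : Y.ncard ≤ ℓ)
    (hmin : ∀ (W : Type) (iW : Fintype W) (H : SimpleGraph W), F W H →
      ∀ D : Set W, IsStarForest (H.induce Dᶜ) → ℓ ≤ D.ncard)
    (hcov : HasStarCover (H₀.induce Yᶜ))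
    (k : ℕ) (hk : 1 ≤ k) :
    (∃ S : Set (Vk Y k), IsMaxFFreeSet F (Gk H₀ Y k) S ∧
      S.ncard = Fintype.card (Vk Y k) - 1) ∧
    2 ^ k ≤ {S : Set (Vk Y k) | IsMaxFFreeSet F (Gk H₀ Y k) S}.ncard := by
  classical
  obtain ⟨CP, hCA, hCB⟩ := hcov
  set G := Gk H₀ Y k with hGdef
  have hYpos : 1 ≤ Y.ncard := by
    rw [← Set.ncard_singleton (x0 : W₀)]
    exact Set.ncard_le_ncard (by simp [x0.2]) (Set.toFinite Y)
  have hlpos : 1 ≤ ℓ := le_trans hYpos hYcard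
  set Z : Set (Vk Y k) := Sum.inl '' {a : ↑Y | a ≠ x0} with hZdef
  have hZcard : Z.ncard < ℓ := by
    have h2 : ({a : ↑Y | a ≠ x0} : Set ↑Y) = Set.univ \ {x0} := by
      ext a; simp
    have h4 : (Set.univ : Set ↑Y).ncard = Y.ncard := by
      rw [Set.ncard_univ, Nat.card_coe_set_eq]
    have h5 : Z.ncard = Y.ncard - 1 := by
      rw [hZdef, Set.ncard_image_of_injective _ Sum.inl_injective, h2,
        Set.ncard_diff_singleton_of_mem (Set.mem_univ x0), h4]
    omega
  have hinl : ∀ (X : Set (Vk Y k)) (a : ↑Y), Sum.inl a ∈ X \ Z → a = x0 := by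
    intro X a ha
    by_contra hne
    exact ha.2 ⟨a, hne, rfl⟩
  set xc : Vk Y k := Sum.inl x0 with hxc
  set NS : Set (Vk Y k) := {xc}ᶜ with hNSdef
  -- ### F-freeness of the near-spanning set
  have hNSfree : FFree F (G.induce NS) := by
    apply FFree_of_small_del F G ℓ hmin NS Z hZcard
    have hform : ∀ a : ↑Y, Sum.inl a ∈ NS \ Z → False := by
      intro a ha
      have h1 : a = x0 := hinl NS a ha
      have h2 : (Sum.inl a : Vk Y k) ∈ NS := ha.1
      rw [h1] at h2
      exact h2 rfl
    set Cov : Set ↑(NS \ Z) :=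
      {u : ↑(NS \ Z) | ∃ p : ↑(Yᶜ) × Fin k, u.1 = Sum.inr p ∧ p.1 ∈ CP} with hCov
    have hCmem : ∀ (u : ↑(NS \ Z)) (p : ↑(Yᶜ) × Fin k), u.1 = Sum.inr p →
        (u ∈ Cov ↔ p.1 ∈ CP) := by
      intro u p hp
      simp only [hCov, Set.mem_setOf_eq, hp]
      constructor
      · rintro ⟨p', hp', hc⟩
        cases Sum.inr_injective hp'
        exact hc
      · intro hc
        exact ⟨p, rfl, hc⟩
    refine ⟨Cov, ?_, ?_⟩
    · rintro ⟨a | p, hu⟩ ⟨b | q, hv⟩ huv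
      · exact (hform a hu).elim
      · exact (hform a hu).elim
      · exact (hform b hv).elim
      · rw [hCmem ⟨Sum.inr p, hu⟩ p rfl, hCmem ⟨Sum.inr q, hv⟩ q rfl]
        exact hCA p.1 q.1 huv.2
    · rintro ⟨a | p, hu⟩ huC b c hub huc
      · exact (hform a hu).elim
      · rcases b with ⟨b' | q, hb⟩
        · exact (hform b' hb).elim
        · rcases c with ⟨c' | r, hc⟩
          · exact (hform c' hc).elim
          · have hpC : p.1 ∉ CP := by
              intro hpc
              exact huC ((hCmem _ p rfl).mpr hpc)
            have h1 : q.1 = r.1 := hCB p.1 hpC q.1 r.1 hub.2 huc.2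
            have h2 : q.2 = r.2 := hub.1.symm.trans huc.1
            apply Subtype.ext
            show Sum.inr q = Sum.inr r
            rw [show q = r from Prod.ext h1 h2]
  -- ### maximality of the near-spanning set
  have hNSmax : IsMaxFFreeSet F G NS := by
    refine ⟨hNSfree, ?_⟩
    intro T hT
    have hTuniv : T = Set.univ := by
      apply Set.eq_univ_of_forall
      intro u
      by_cases hux : u = xc
      · obtain ⟨v, hvT, hvNS⟩ := Set.exists_of_ssubset hT
        have hv : v = xc := by
          by_contra h
          exact hvNS h
        rw [hux, ← hv]
        exact hvT
      · exact hT.subset hux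
    rw [hTuniv]
    exact not_FFree_of_isoSubset F inst₀ hF₀ (Set.subset_univ _) (copyIso H₀ Y k ⟨0, hk⟩)
  have hNScard : NS.ncard = Fintype.card (Vk Y k) - 1 := by
    rw [hNSdef, Set.compl_eq_univ_diff,
      Set.ncard_diff_singleton_of_mem (Set.mem_univ xc), Set.ncard_univ,
      Nat.card_eq_fintype_card]
  -- ### F-freeness of the pick sets
  have hTfree : ∀ s : Fin k → Bool, FFree F (G.induce (pickSet Y k CP s)) := by
    intro s
    apply FFree_of_small_del F G ℓ hmin _ Z hZcard
    set Cov : Set ↑(pickSet Y k CP s \ Z) :=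
      {u : ↑(pickSet Y k CP s \ Z) | u.1 = Sum.inl x0} with hCov
    have hnoadj : ∀ (p q : ↑(Yᶜ) × Fin k), Sum.inr p ∈ pickSet Y k CP s \ Z →
        Sum.inr q ∈ pickSet Y k CP s \ Z → ¬ G.Adj (Sum.inr p) (Sum.inr q) := by
      intro p q hp hq hadj
      have h1 : p.1 ∈ CP ↔ s p.2 = true := hp.1
      have h2 : q.1 ∈ CP ↔ s q.2 = true := hq.1
      have h3 : p.2 = q.2 := hadj.1
      have h4 := hCA p.1 q.1 hadj.2
      rw [h3] at h1
      tauto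
    refine ⟨Cov, ?_, ?_⟩
    · rintro ⟨a | p, hu⟩ ⟨b | q, hv⟩ huv
      · have ha := hinl _ a hu
        have hb := hinl _ b hv
        have hadj : H₀.Adj ↑a ↑b := huv
        rw [ha, hb] at hadj
        exact (H₀.irrefl hadj).elim
      · have ha := hinl _ a hu
        simp only [hCov, Set.mem_setOf_eq]
        constructor
        · intro _
          simp
        · intro _
          rw [ha]
      · have hb := hinl _ b hv
        simp only [hCov, Set.mem_setOf_eq]
        constructor
        · intro h
          simp at h
        · intro h
          exact absurd (by rw [hb]) h
      · exact (hnoadj p q hu hv huv).elim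
    · rintro ⟨a | p, hu⟩ huC b c hub huc
      · have ha := hinl _ a hu
        exact (huC (by simp only [hCov, Set.mem_setOf_eq]; rw [ha])).elim
      · rcases b with ⟨b' | q, hb⟩
        · rcases c with ⟨c' | r, hc⟩
          · have hb'1 := hinl _ b' hb
            have hc'1 := hinl _ c' hc
            apply Subtype.ext
            show Sum.inl b' = Sum.inl c'
            rw [hb'1, hc'1]
          · exact (hnoadj p r hu hc huc).elim
        · exact (hnoadj p q hu hb hub).elim
  -- ### maximal extensions and injectivity
  choose Mfun hMsub hMmax using fun s : Fin k → Bool =>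
    exists_maxFFree_superset F G (pickSet Y k CP s) (hTfree s)
  have hMinj : Function.Injective Mfun := by
    intro s s' hss
    by_contra hne
    obtain ⟨i, hi⟩ := Function.ne_iff.mp hne
    have hcopy : copySet Y k i ⊆ Mfun s := by
      intro u hu
      rcases u with a | p
      · exact hMsub s (mem_pickSet_inl a)
      · have hpi : p.2 = i := hu
        have hor : s i = true ∨ s' i = true := by
          rcases Bool.dichotomy (s i) with hsi | hsi
          · rcases Bool.dichotomy (s' i) with hs'i | hs'i
            · exact absurd (hsi.trans hs'i.symm) hi
            · exact Or.inr hs'i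
          · exact Or.inl hsi
        have hor' : s i = false ∨ s' i = false := by
          rcases Bool.dichotomy (s i) with hsi | hsi
          · exact Or.inl hsi
          · rcases Bool.dichotomy (s' i) with hs'i | hs'i
            · exact Or.inr hs'i
            · exact absurd (hsi.trans hs'i.symm) hi
        have hcase : (p.1 ∈ CP ↔ s p.2 = true) ∨ (p.1 ∈ CP ↔ s' p.2 = true) := by
          rw [hpi]
          by_cases hc : p.1 ∈ CP
          · rcases hor with h | h
            · exact Or.inl (by rw [h]; exact iff_of_true hc rfl)
            · exact Or.inr (by rw [h]; exact iff_of_true hc rfl)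
          · rcases hor' with h | h
            · exact Or.inl (by rw [h]; exact iff_of_false hc Bool.false_ne_true)
            · exact Or.inr (by rw [h]; exact iff_of_false hc Bool.false_ne_true)
        rcases hcase with h | h
        · exact hMsub s ((mem_pickSet_inr p).mpr h)
        · rw [hss]
          exact hMsub s' ((mem_pickSet_inr p).mpr h)
    exact not_FFree_of_isoSubset F inst₀ hF₀ hcopy (copyIso H₀ Y k i) (hMmax s).1
  -- ### conclusion
  have hrange : Set.range Mfun ⊆ {S : Set (Vk Y k) | IsMaxFFreeSet F G S} := by
    rintro _ ⟨s, rfl⟩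
    exact hMmax s
  have hcard : (Set.range Mfun).ncard = 2 ^ k := by
    rw [← Nat.card_coe_set_eq, Nat.card_range_of_injective hMinj,
      Nat.card_eq_fintype_card, Fintype.card_fun, Fintype.card_bool, Fintype.card_fin]
  refine ⟨⟨NS, hNSmax, hNScard⟩, ?_⟩
  calc (2 : ℕ) ^ k = (Set.range Mfun).ncard := hcard.symm
    _ ≤ _ := Set.ncard_le_ncard hrange (Set.toFinite _)
/-! ### Main lemma: CKS implies a star forest member -/

lemma exists_starForest (F : GraphClass)
    (hFne : ∃ (W : Type) (_ : Fintype W) (H : SimpleGraph W), F W H)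
    (hcks : HasCKS_FFree F) :
    ∃ (W : Type) (_ : Fintype W) (H : SimpleGraph W), F W H ∧ IsStarForest H := by
  classical
  have h0 : ∃ m : ℕ, ∃ (W : Type) (iW : Fintype W) (H : SimpleGraph W), F W H ∧
      ∃ D : Set W, D.ncard ≤ m ∧ IsStarForest (H.induce Dᶜ) := by
    obtain ⟨W, iW, H, hH⟩ := hFne
    refine ⟨Fintype.card W, W, iW, H, hH, Set.univ, ?_, ?_⟩
    · rw [Set.ncard_univ, Nat.card_eq_fintype_card]
    · rw [Set.compl_univ]
      intro c
      obtain ⟨v, hv⟩ := c.exists_rep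
      exact (v.2).elim
  set ℓ := Nat.find h0 with hldef
  have hPl := Nat.find_spec h0
  have hmin' := fun m (hm : m < ℓ) => Nat.find_min h0 hm
  obtain ⟨W₀, iW₀, H₀, hF₀, Y, hYcard, hYSF⟩ := hPl
  by_cases hl0 : ℓ = 0
  · have hY0 : Y = ∅ := by
      have h1 : Y.ncard = 0 := le_antisymm (hl0 ▸ hYcard) (Nat.zero_le _)
      exact (Set.ncard_eq_zero (Set.toFinite Y)).mp h1
    rw [hY0, Set.compl_empty] at hYSF
    refine ⟨W₀, iW₀, H₀, hF₀, ?_⟩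
    rw [isStarForest_iff_hasStarCover] at hYSF ⊢
    exact hYSF.of_iso (SimpleGraph.induceUnivIso H₀)
  · have hlpos : 1 ≤ ℓ := Nat.one_le_iff_ne_zero.mpr hl0
    exfalso
    have hmin : ∀ (W : Type) (iW : Fintype W) (H : SimpleGraph W), F W H →
        ∀ D : Set W, IsStarForest (H.induce Dᶜ) → ℓ ≤ D.ncard := by
      intro W iW H hH D hD
      by_contra hcon
      push_neg at hcon
      exact hmin' D.ncard hcon ⟨W, iW, H, hH, D, le_refl _, hD⟩
    have hYne : Y.Nonempty := by
      rcases Set.eq_empty_or_nonempty Y with h | h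
      · exfalso
        apply hmin' 0 hlpos
        refine ⟨W₀, iW₀, H₀, hF₀, Y, ?_, hYSF⟩
        rw [h, Set.ncard_empty]
      · exact h
    obtain ⟨x, hx⟩ := hYne
    have hcov : HasStarCover (H₀.induce Yᶜ) := (isStarForest_iff_hasStarCover).mp hYSF
    obtain ⟨p, hp⟩ := hcks
    obtain ⟨k, hk1, hklt⟩ := exists_big_k p Y.ncard (Yᶜ : Set W₀).ncard
    have hYc : Fintype.card ↑Y = Y.ncard := by
      rw [← Nat.card_coe_set_eq, Nat.card_eq_fintype_card]
    have hYcc : Fintype.card ↑(Yᶜ : Set W₀) = (Yᶜ : Set W₀).ncard := by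
      rw [← Nat.card_coe_set_eq, Nat.card_eq_fintype_card]
    have hcards : Fintype.card (Vk Y k) = Y.ncard + (Yᶜ : Set W₀).ncard * k := by
      rw [show Fintype.card (Vk Y k) =
          Fintype.card ↑Y + Fintype.card ↑(Yᶜ : Set W₀) * Fintype.card (Fin k) by
        simp [Vk, Fintype.card_sum, Fintype.card_prod]]
      rw [hYc, hYcc, Fintype.card_fin]
    obtain ⟨hNS, hcount⟩ := construction_bound F H₀ hF₀ Y ⟨x, hx⟩ ℓ hYcard hmin hcov k hk1
    have hb := hp (Vk Y k) inferInstance (Gk H₀ Y k) hNS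
    rw [hcards] at hb
    have := hcount.trans hb
    omega

/-! ### The complement reduction -/

/-- The class of complements of members of `F`. -/
def complClass (F : GraphClass) : GraphClass := fun W _ H => F W Hᶜ

lemma induce_compl_eq {V : Type} (G : SimpleGraph V) (S : Set V) :
    (Gᶜ).induce S = (G.induce S)ᶜ := by
  ext a b
  constructor
  · rintro ⟨hne, hnadj⟩
    exact ⟨fun h => hne (congrArg Subtype.val h), hnadj⟩
  · rintro ⟨hne, hnadj⟩
    exact ⟨fun h => hne (Subtype.ext h), hnadj⟩

/-- Complementing an isomorphism. -/
noncomputable def isoCompl {V V' : Type} {G : SimpleGraph V} {G' : SimpleGraph V'}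
    (e : G ≃g G') : Gᶜ ≃g G'ᶜ where
  toEquiv := e.toEquiv
  map_rel_iff' := by
    intro a b
    show G'ᶜ.Adj (e a) (e b) ↔ Gᶜ.Adj a b
    rw [SimpleGraph.compl_adj, SimpleGraph.compl_adj, e.map_adj_iff]
    constructor
    · rintro ⟨hne, h⟩
      exact ⟨fun hh => hne (congrArg e hh), h⟩
    · rintro ⟨hne, h⟩
      exact ⟨fun hh => hne (e.toEquiv.injective hh), h⟩

lemma ffree_compl_iff (F : GraphClass) {V : Type} [Fintype V] (G : SimpleGraph V) :
    FFree (complClass F) G ↔ FFree F Gᶜ := by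
  constructor
  · intro h S W iW H hH
    refine ⟨fun e => ?_⟩
    have e2 : (Gᶜ.induce S)ᶜ ≃g Hᶜ := isoCompl e
    rw [induce_compl_eq, compl_compl] at e2
    have hH' : complClass F W Hᶜ := by
      show F W Hᶜᶜ
      rw [compl_compl]
      exact hH
    exact (h S W iW Hᶜ hH').false e2
  · intro h S W iW H hH
    refine ⟨fun e => ?_⟩
    have e2 : (G.induce S)ᶜ ≃g Hᶜ := isoCompl e
    rw [← induce_compl_eq] at e2
    exact (h S W iW Hᶜ hH).false e2

lemma maxSets_compl (F : GraphClass) {V : Type} [Fintype V] (G : SimpleGraph V)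
    (U : Set V) : IsMaxFFreeSet (complClass F) G U ↔ IsMaxFFreeSet F Gᶜ U := by
  have key : ∀ T : Set V, FFree (complClass F) (G.induce T) ↔ FFree F (Gᶜ.induce T) := by
    intro T
    rw [ffree_compl_iff, ← induce_compl_eq]
  unfold IsMaxFFreeSet
  simp only [key]

lemma hasCKS_compl (F : GraphClass) (h : HasCKS_FFree F) :
    HasCKS_FFree (complClass F) := by
  obtain ⟨p, hp⟩ := h
  refine ⟨p, ?_⟩
  intro V iV G hG
  have hsets : {S : Set V | IsMaxFFreeSet (complClass F) G S} =
      {S : Set V | IsMaxFFreeSet F Gᶜ S} := by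
    ext S
    exact maxSets_compl F G S
  rw [hsets]
  apply hp V iV Gᶜ
  obtain ⟨S, hS1, hS2⟩ := hG
  exact ⟨S, (maxSets_compl F G S).mp hS1, hS2⟩

/-- Let `F` be a nonempty set of graphs.  If the class of `F`-free
graphs has the CKS property, then `F` contains a star forest and a graph whose complement
is a star forest. -/
theorem cks_implies_starForest_and_complement
    (F : GraphClass)
    (hFne : ∃ (W : Type) (_ : Fintype W) (H : SimpleGraph W), F W H)
    (hcks : HasCKS_FFree F) :
    (∃ (W : Type) (_ : Fintype W) (H : SimpleGraph W), F W H ∧ IsStarForest H) ∧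
    (∃ (W : Type) (_ : Fintype W) (H : SimpleGraph W), F W H ∧ IsStarForest Hᶜ) := by
  constructor
  · exact exists_starForest F hFne hcks
  · have hFne' : ∃ (W : Type) (_ : Fintype W) (H : SimpleGraph W), complClass F W H := by
      obtain ⟨W, iW, H, hH⟩ := hFne
      refine ⟨W, iW, Hᶜ, ?_⟩
      show F W Hᶜᶜ
      rw [compl_compl]
      exact hH
    obtain ⟨W, iW, H, hH, hSF⟩ :=
      exists_starForest (complClass F) hFne' (hasCKS_compl F hcks)
    refine ⟨W, iW, Hᶜ, hH, ?_⟩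
    rw [compl_compl]
    exact hSF
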